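/- Let H be an r-graph with at least two edges, and let p = p(n) ∈ (0,1] be a function of n such that p(n)·n^r → ∞ and p(n)·n^{s(H)} → 0 as n → ∞. Then asymptotically almost surely ex(G^r_{n,p}, H) = (1+o(1))·p·C(n,r). -/

import Mathlib

open Finset Filter

namespace Paper

/-- An `r`-graph: every edge has size `r`. -/
def IsUniform {V : Type*} (H : Finset (Finset V)) (r : ℕ) : Prop :=
  ∀ e ∈ H, e.card = r

/-- The set of vertices covered by the edges of `H`. -/
def verts {V : Type*} [DecidableEq V] (H : Finset (Finset V)) : Finset V :=
  H.sup id

/-- `c` is a copy of `F`: the image of `F` under a map injective on the vertices of `F`. -/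
def IsCopyOf {V W : Type*} [DecidableEq V] [DecidableEq W]
    (c : Finset (Finset W)) (F : Finset (Finset V)) : Prop :=
  ∃ f : V → W, Set.InjOn f ↑(verts F) ∧ c = F.image (fun e => e.image f)

/-- `H` contains a copy of `F`. -/
def ContainsCopy {V W : Type*} [DecidableEq V] [DecidableEq W]
    (H : Finset (Finset W)) (F : Finset (Finset V)) : Prop :=
  ∃ c, c ⊆ H ∧ IsCopyOf c F

open Classical in
/-- The Turán number: maximum number of edges of a subgraph of `G` with no copy of `F`. -/
noncomputable def exNum {V W : Type*} [DecidableEq V] [DecidableEq W]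
    (G : Finset (Finset V)) (F : Finset (Finset W)) : ℕ :=
  (G.powerset.filter (fun G' => ¬ ContainsCopy G' F)).sup Finset.card

/-- All possible edges of the complete `r`-graph on `Fin n`. -/
def allEdges (n r : ℕ) : Finset (Finset (Fin n)) :=
  Finset.powersetCard r Finset.univ

open Classical in
/-- Probability, under the Erdős–Rényi random `r`-graph `G^r_{n,p}`, of the event `A`. -/
noncomputable def prob (n r : ℕ) (p : ℝ) (A : Set (Finset (Finset (Fin n)))) : ℝ :=
  ∑ G ∈ (allEdges n r).powerset,
    if G ∈ A then p ^ G.card * (1 - p) ^ ((allEdges n r).card - G.card) else 0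

/-- `m(H)`, the `r`-density of `H`. -/
noncomputable def mDensity {V : Type*} [DecidableEq V] (r : ℕ) (H : Finset (Finset V)) : ℝ :=
  sSup {x : ℝ | ∃ G : Finset (Finset V), G ⊆ H ∧ 2 ≤ G.card ∧
    x = ((G.card : ℝ) - 1) / (((verts G).card : ℝ) - (r : ℝ))}

/-- `s(H) = 1/m(H)`. -/
noncomputable def sDensity {V : Type*} [DecidableEq V] (r : ℕ) (H : Finset (Finset V)) : ℝ :=
  1 / mDensity r H

/-- A tight `k`-tree. -/
def IsTightTree {V : Type*} [DecidableEq V] (k : ℕ) (T : Finset (Finset V)) : Prop :=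
  IsUniform T k ∧ ∃ (t : ℕ) (e : Fin t → Finset V), Function.Injective e ∧
    T = Finset.image e Finset.univ ∧
    ∀ i : Fin t, 0 < (i : ℕ) →
      ∃ v ∈ e i, ∃ s : Fin t, (s : ℕ) < (i : ℕ) ∧
        (∀ j : Fin t, (j : ℕ) < (i : ℕ) → v ∉ e j) ∧ e i \ {v} ⊆ e s

/-- The `r`-expansion of a hypergraph `S`: each edge `e` is enlarged with `r - |e|`
new vertices of degree one, distinct new vertices for distinct edges. -/
def expansion {V : Type*} [DecidableEq V] (r : ℕ) (S : Finset (Finset V)) :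
    Finset (Finset (V ⊕ Finset V × ℕ)) :=
  S.image (fun e =>
    e.image Sum.inl ∪ (Finset.range (r - e.card)).image (fun i => Sum.inr (e, i)))

/-- The codegree `d_H(σ)`: number of edges of `H` containing `σ`. -/
def degOf {V : Type*} [DecidableEq V] (H : Finset (Finset V)) (σ : Finset V) : ℕ :=
  (H.filter (fun e => σ ⊆ e)).card

/-- `Δ_j(S)`: the maximum over sets `J` of `j` edges of `H` of the number of members
of the collection `S` containing all edges of `J`. -/
def maxDeg {V : Type*} [DecidableEq V] (H : Finset (Finset V))
    (S : Finset (Finset (Finset V))) (j : ℕ) : ℕ :=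
  (Finset.powersetCard j H).sup (fun J => (S.filter (fun c => J ⊆ c)).card)

/-- The complete `k`-graph on `m` vertices. -/
def completeHypergraph (m k : ℕ) : Finset (Finset (Fin m)) :=
  Finset.powersetCard k Finset.univ

/-- The `r`-uniform linear cycle of length `m`. -/
def linearCycle (r m : ℕ) : Finset (Finset (ZMod (m * (r - 1)))) :=
  (Finset.range m).image (fun i =>
    (Finset.range r).image (fun j => ((i * (r - 1) + j : ℕ) : ZMod (m * (r - 1)))))

open Classical in
/-- The `r`-graph whose edges are the vertex sets of the `r`-cliques of `G`. -/
noncomputable def cliqueEdges {V : Type*} [Fintype V] (G : SimpleGraph V) (r : ℕ) :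
    Finset (Finset V) :=
  Finset.univ.filter (fun s => G.IsNClique r s)


/-- weight of a graph -/
noncomputable def pw (n r : ℕ) (p : ℝ) (G : Finset (Finset (Fin n))) : ℝ :=
  p ^ G.card * (1 - p) ^ ((allEdges n r).card - G.card)

lemma pw_nonneg {n r : ℕ} {p : ℝ} (hp0 : 0 ≤ p) (hp1 : p ≤ 1) (G : Finset (Finset (Fin n))) :
    0 ≤ pw n r p G := by
  have : (0:ℝ) ≤ 1 - p := by linarith
  exact mul_nonneg (pow_nonneg hp0 _) (pow_nonneg this _)

open Classical in
lemma prob_eq (n r : ℕ) (p : ℝ) (A : Set (Finset (Finset (Fin n)))) :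
    prob n r p A = ∑ G ∈ (allEdges n r).powerset, if G ∈ A then pw n r p G else 0 := rfl

lemma sum_pow_powerset {α : Type*} [DecidableEq α] (p q : ℝ) (A : Finset α) :
    ∑ G ∈ A.powerset, p ^ G.card * q ^ (A.card - G.card) = (p + q) ^ A.card := by
  induction A using Finset.induction_on with
  | empty => simp
  | insert a A ha ih =>
    have hdisj : Disjoint A.powerset (A.powerset.image (insert a)) := by
      rw [Finset.disjoint_left]
      intro G hG hG'
      obtain ⟨G', hG', rfl⟩ := Finset.mem_image.1 hG'
      exact ha (Finset.mem_powerset.1 hG (Finset.mem_insert_self a G'))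
    have hinj : ∀ x ∈ A.powerset, ∀ y ∈ A.powerset, insert a x = insert a y → x = y := by
      intro x hx y hy hxy
      have hax : a ∉ x := fun h => ha (Finset.mem_powerset.1 hx h)
      have hay : a ∉ y := fun h => ha (Finset.mem_powerset.1 hy h)
      rw [← Finset.erase_insert hax, ← Finset.erase_insert hay, hxy]
    rw [Finset.powerset_insert, Finset.sum_union hdisj, Finset.sum_image hinj,
      Finset.card_insert_of_notMem ha]
    have h1 : ∑ G ∈ A.powerset, p ^ G.card * q ^ (A.card + 1 - G.card)
        = q * (p + q) ^ A.card := by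
      rw [← ih, Finset.mul_sum]
      refine Finset.sum_congr rfl fun G hG => ?_
      have h : G.card ≤ A.card := Finset.card_le_card (Finset.mem_powerset.1 hG)
      rw [Nat.succ_sub h, pow_succ]
      ring
    have h2 : ∑ G ∈ A.powerset, p ^ (insert a G).card * q ^ (A.card + 1 - (insert a G).card)
        = p * (p + q) ^ A.card := by
      rw [← ih, Finset.mul_sum]
      refine Finset.sum_congr rfl fun G hG => ?_
      have haG : a ∉ G := fun h => ha (Finset.mem_powerset.1 hG h)
      rw [Finset.card_insert_of_notMem haG, Nat.add_sub_add_right, pow_succ]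
      ring
    rw [h1, h2, pow_succ]
    ring

lemma sum_pw (n r : ℕ) {p : ℝ} :
    ∑ G ∈ (allEdges n r).powerset, pw n r p G = 1 := by
  have := sum_pow_powerset p (1 - p) (allEdges n r)
  simpa [pw] using this


open Classical in
lemma sum_pw_superset {n r : ℕ} {p : ℝ} {c : Finset (Finset (Fin n))}
    (hc : c ⊆ allEdges n r) :
    ∑ G ∈ (allEdges n r).powerset, (if c ⊆ G then pw n r p G else 0) = p ^ c.card := by
  set M := allEdges n r with hM
  rw [← Finset.sum_filter]
  have key : ∑ G ∈ M.powerset.filter (fun G => c ⊆ G), pw n r p G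
      = ∑ G' ∈ (M \ c).powerset,
          p ^ (G'.card + c.card) * (1 - p) ^ ((M \ c).card - G'.card) := by
    refine Finset.sum_nbij' (fun G => G \ c) (fun G' => G' ∪ c) ?_ ?_ ?_ ?_ ?_
    · intro G hG
      rw [Finset.mem_filter, Finset.mem_powerset] at hG
      exact Finset.mem_powerset.2 (Finset.sdiff_subset_sdiff hG.1 (le_refl c))
    · intro G' hG'
      rw [Finset.mem_powerset] at hG'
      rw [Finset.mem_filter, Finset.mem_powerset]
      exact ⟨Finset.union_subset (hG'.trans Finset.sdiff_subset) hc,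
        Finset.subset_union_right⟩
    · intro G hG
      rw [Finset.mem_filter] at hG
      exact Finset.sdiff_union_of_subset hG.2
    · intro G' hG'
      rw [Finset.mem_powerset] at hG'
      have hd : Disjoint G' c := Finset.disjoint_of_subset_left hG' Finset.sdiff_disjoint
      exact Finset.union_sdiff_cancel_right hd
    · intro G hG
      rw [Finset.mem_filter, Finset.mem_powerset] at hG
      have h1 : (G \ c).card + c.card = G.card := by
        rw [Finset.card_sdiff_of_subset hG.2]
        exact Nat.sub_add_cancel (Finset.card_le_card hG.2)
      have h2 : (M \ c).card - (G \ c).card = M.card - G.card := by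
        rw [Finset.card_sdiff_of_subset hc, Finset.card_sdiff_of_subset hG.2]
        have h3 : c.card ≤ G.card := Finset.card_le_card hG.2
        have h4 : G.card ≤ M.card := Finset.card_le_card hG.1
        have h5 : c.card ≤ M.card := Finset.card_le_card hc
        omega
      rw [pw, h1, h2]
  rw [key]
  have : ∀ G' ∈ (M \ c).powerset,
      p ^ (G'.card + c.card) * (1 - p) ^ ((M \ c).card - G'.card)
      = p ^ c.card * (p ^ G'.card * (1 - p) ^ ((M \ c).card - G'.card)) := by
    intro G' _; rw [pow_add]; ring
  rw [Finset.sum_congr rfl this, ← Finset.mul_sum, sum_pow_powerset]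
  simp

open Classical in
lemma expect_count {n r : ℕ} {p : ℝ} (S : Finset (Finset (Finset (Fin n))))
    (hS : ∀ c ∈ S, c ⊆ allEdges n r) :
    ∑ G ∈ (allEdges n r).powerset, pw n r p G * ((S.filter (· ⊆ G)).card : ℝ)
      = ∑ c ∈ S, p ^ c.card := by
  have h1 : ∀ G, pw n r p G * ((S.filter (· ⊆ G)).card : ℝ)
      = ∑ c ∈ S, (if c ⊆ G then pw n r p G else 0) := by
    intro G
    rw [Finset.card_filter]
    push_cast
    rw [Finset.mul_sum]
    refine Finset.sum_congr rfl fun c _ => ?_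
    split_ifs <;> simp
  rw [Finset.sum_congr rfl (fun G _ => h1 G), Finset.sum_comm]
  exact Finset.sum_congr rfl fun c hc => sum_pw_superset (hS c hc)

lemma prob_nonneg {n r : ℕ} {p : ℝ} (hp0 : 0 ≤ p) (hp1 : p ≤ 1)
    (A : Set (Finset (Finset (Fin n)))) : 0 ≤ prob n r p A := by
  rw [prob_eq]
  refine Finset.sum_nonneg fun G _ => ?_
  split_ifs
  · exact pw_nonneg hp0 hp1 G
  · exact le_refl 0

lemma prob_le_one {n r : ℕ} {p : ℝ} (hp0 : 0 ≤ p) (hp1 : p ≤ 1)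
    (A : Set (Finset (Finset (Fin n)))) : prob n r p A ≤ 1 := by
  rw [prob_eq, ← sum_pw n r (p := p)]
  refine Finset.sum_le_sum fun G _ => ?_
  split_ifs
  · exact le_refl _
  · exact pw_nonneg hp0 hp1 G

/-- generic first-moment bound -/
lemma prob_le_of {n r : ℕ} {p : ℝ} (hp0 : 0 ≤ p) (hp1 : p ≤ 1)
    (A : Set (Finset (Finset (Fin n)))) (f : Finset (Finset (Fin n)) → ℝ)
    (hf : ∀ G, 0 ≤ f G) (h : ∀ G, G ∈ A → 1 ≤ f G) :
    prob n r p A ≤ ∑ G ∈ (allEdges n r).powerset, pw n r p G * f G := by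
  rw [prob_eq]
  refine Finset.sum_le_sum fun G _ => ?_
  split_ifs with hGA
  · calc pw n r p G = pw n r p G * 1 := (mul_one _).symm
      _ ≤ pw n r p G * f G := by
        exact mul_le_mul_of_nonneg_left (h G hGA) (pw_nonneg hp0 hp1 G)
  · exact mul_nonneg (pw_nonneg hp0 hp1 G) (hf G)

lemma prob_ge {n r : ℕ} {p : ℝ} (hp0 : 0 ≤ p) (hp1 : p ≤ 1)
    (A B1 B2 : Set (Finset (Finset (Fin n))))
    (h : ∀ G ∈ (allEdges n r).powerset, G ∉ B1 → G ∉ B2 → G ∈ A) :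
    1 - prob n r p B1 - prob n r p B2 ≤ prob n r p A := by
  classical
  rw [prob_eq, prob_eq, prob_eq, ← sum_pw n r (p := p), ← Finset.sum_sub_distrib,
    ← Finset.sum_sub_distrib]
  refine Finset.sum_le_sum fun G hG => ?_
  have hw := pw_nonneg (n := n) (r := r) hp0 hp1 G
  by_cases hA : G ∈ A
  · rw [if_pos hA]
    split_ifs <;> linarith
  · have := h G hG
    by_cases hB1 : G ∈ B1
    · rw [if_pos hB1, if_neg hA]
      split_ifs <;> linarith
    · have hB2 : G ∈ B2 := by by_contra hB2; exact hA (this hB1 hB2)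
      rw [if_pos hB2, if_neg hA]
      split_ifs <;> linarith


open Classical in
lemma card_eq_sum_ind {n r : ℕ} {G : Finset (Finset (Fin n))}
    (hG : G ⊆ allEdges n r) :
    (G.card : ℝ) = ∑ a ∈ allEdges n r, (if a ∈ G then (1:ℝ) else 0) := by
  have h : G = (allEdges n r).filter (· ∈ G) := by
    rw [Finset.filter_mem_eq_inter, Finset.inter_eq_right.2 hG]
  conv_lhs => rw [h]
  rw [Finset.card_filter]
  push_cast
  rfl

lemma expect_card {n r : ℕ} {p : ℝ} :
    ∑ G ∈ (allEdges n r).powerset, pw n r p G * (G.card : ℝ)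
      = ((allEdges n r).card : ℝ) * p := by
  classical
  set M := allEdges n r with hM
  have h1 : ∀ G ∈ M.powerset, pw n r p G * (G.card : ℝ)
      = ∑ a ∈ M, (if ({a} : Finset (Finset (Fin n))) ⊆ G then pw n r p G else 0) := by
    intro G hG
    rw [card_eq_sum_ind (Finset.mem_powerset.1 hG), Finset.mul_sum]
    refine Finset.sum_congr rfl fun a _ => ?_
    by_cases h : a ∈ G <;> simp [h, Finset.singleton_subset_iff]
  rw [Finset.sum_congr rfl h1, Finset.sum_comm]
  have h2 : ∀ a ∈ M, ∑ G ∈ M.powerset, (if ({a} : Finset (Finset (Fin n))) ⊆ G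
      then pw n r p G else 0) = p := by
    intro a ha
    rw [sum_pw_superset (Finset.singleton_subset_iff.2 ha)]
    simp
  rw [Finset.sum_congr rfl h2, Finset.sum_const, nsmul_eq_mul]

lemma expect_card_sq {n r : ℕ} {p : ℝ} (hp0 : 0 ≤ p) :
    ∑ G ∈ (allEdges n r).powerset, pw n r p G * (G.card : ℝ) ^ 2
      ≤ ((allEdges n r).card : ℝ) * p + ((allEdges n r).card : ℝ) ^ 2 * p ^ 2 := by
  classical
  set M := allEdges n r with hM
  have h1 : ∀ G ∈ M.powerset, pw n r p G * (G.card : ℝ) ^ 2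
      = ∑ a ∈ M, ∑ b ∈ M,
        (if ({a, b} : Finset (Finset (Fin n))) ⊆ G then pw n r p G else 0) := by
    intro G hG
    have hc := card_eq_sum_ind (n := n) (r := r) (Finset.mem_powerset.1 hG)
    rw [sq, hc, Finset.sum_mul_sum, Finset.mul_sum]
    refine Finset.sum_congr rfl fun a _ => ?_
    rw [Finset.mul_sum]
    refine Finset.sum_congr rfl fun b _ => ?_
    by_cases ha : a ∈ G <;> by_cases hb : b ∈ G <;>
      simp [ha, hb, Finset.insert_subset_iff]
  rw [Finset.sum_congr rfl h1, Finset.sum_comm]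
  have h2 : ∀ a ∈ M, ∑ G ∈ M.powerset, ∑ b ∈ M,
      (if ({a, b} : Finset (Finset (Fin n))) ⊆ G then pw n r p G else 0)
      ≤ p + (M.card : ℝ) * p ^ 2 := by
    intro a ha
    rw [Finset.sum_comm]
    have h3 : ∀ b ∈ M, ∑ G ∈ M.powerset,
        (if ({a, b} : Finset (Finset (Fin n))) ⊆ G then pw n r p G else 0)
        = p ^ (({a, b} : Finset (Finset (Fin n))).card) := by
      intro b hb
      exact sum_pw_superset (by
        intro x hx
        rcases Finset.mem_insert.1 hx with h | h
        · exact h ▸ ha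
        · exact (Finset.mem_singleton.1 h) ▸ hb)
    rw [Finset.sum_congr rfl h3, ← Finset.add_sum_erase M _ ha]
    have h4 : ({a, a} : Finset (Finset (Fin n))).card = 1 := by simp
    have h5 : ∑ b ∈ M.erase a, p ^ (({a, b} : Finset (Finset (Fin n))).card)
        ≤ (M.card : ℝ) * p ^ 2 := by
      have h6 : ∀ b ∈ M.erase a, p ^ (({a, b} : Finset (Finset (Fin n))).card) = p ^ 2 := by
        intro b hb
        rw [Finset.card_pair (Ne.symm (Finset.mem_erase.1 hb).1)]
      rw [Finset.sum_congr rfl h6, Finset.sum_const, nsmul_eq_mul]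
      have : ((M.erase a).card : ℝ) ≤ (M.card : ℝ) := by
        exact_mod_cast Finset.card_le_card (Finset.erase_subset a M)
      exact mul_le_mul_of_nonneg_right this (sq_nonneg p)
    rw [h4, pow_one]
    linarith
  calc ∑ a ∈ M, ∑ G ∈ M.powerset, ∑ b ∈ M,
        (if ({a, b} : Finset (Finset (Fin n))) ⊆ G then pw n r p G else 0)
      ≤ ∑ a ∈ M, (p + (M.card : ℝ) * p ^ 2) := Finset.sum_le_sum h2
    _ = (M.card : ℝ) * p + (M.card : ℝ) ^ 2 * p ^ 2 := by
        rw [Finset.sum_const, nsmul_eq_mul]; ring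

lemma variance_card {n r : ℕ} {p : ℝ} (hp0 : 0 ≤ p) :
    ∑ G ∈ (allEdges n r).powerset,
        pw n r p G * ((G.card : ℝ) - ((allEdges n r).card : ℝ) * p) ^ 2
      ≤ ((allEdges n r).card : ℝ) * p := by
  classical
  set M := allEdges n r with hM
  set N : ℝ := (M.card : ℝ) with hN
  have hexp : ∀ G, pw n r p G * ((G.card : ℝ) - N * p) ^ 2
      = pw n r p G * (G.card : ℝ) ^ 2 - (2 * (N * p)) * (pw n r p G * (G.card : ℝ))
        + (N * p) ^ 2 * pw n r p G := by
    intro G; ring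
  rw [Finset.sum_congr rfl fun G _ => hexp G, Finset.sum_add_distrib,
    Finset.sum_sub_distrib, ← Finset.mul_sum, ← Finset.mul_sum,
    expect_card, sum_pw]
  have := expect_card_sq (n := n) (r := r) (p := p) hp0
  nlinarith [this]

lemma chebyshev {n r : ℕ} {p : ℝ} (hp0 : 0 ≤ p) (hp1 : p ≤ 1) {t : ℝ} (ht : 0 < t) :
    prob n r p {G | ¬ (|(G.card : ℝ) - ((allEdges n r).card : ℝ) * p| ≤ t)}
      ≤ ((allEdges n r).card : ℝ) * p / t ^ 2 := by
  classical
  set M := allEdges n r with hM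
  set N : ℝ := (M.card : ℝ) with hN
  have key := prob_le_of (n := n) (r := r) hp0 hp1
    {G | ¬ (|(G.card : ℝ) - N * p| ≤ t)}
    (fun G => ((G.card : ℝ) - N * p) ^ 2 / t ^ 2)
    (fun G => by positivity)
    (fun G hG => by
      simp only [Set.mem_setOf_eq, not_le] at hG
      rw [le_div_iff₀ (by positivity), one_mul]
      calc t ^ 2 ≤ |(G.card : ℝ) - N * p| ^ 2 := by
            exact pow_le_pow_left₀ ht.le hG.le 2
        _ = ((G.card : ℝ) - N * p) ^ 2 := sq_abs _)
  refine key.trans ?_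
  have : ∀ G, pw n r p G * (((G.card : ℝ) - N * p) ^ 2 / t ^ 2)
      = pw n r p G * ((G.card : ℝ) - N * p) ^ 2 / t ^ 2 := fun G => by ring
  rw [Finset.sum_congr rfl fun G _ => this G, ← Finset.sum_div]
  exact div_le_div_of_nonneg_right (variance_card hp0) (by positivity)

lemma markov {n r : ℕ} {p : ℝ} (hp0 : 0 ≤ p) (hp1 : p ≤ 1)
    (Y : Finset (Finset (Fin n)) → ℝ) (hY : ∀ G, 0 ≤ Y G) {t : ℝ} (ht : 0 < t) :
    prob n r p {G | ¬ (Y G ≤ t)}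
      ≤ (∑ G ∈ (allEdges n r).powerset, pw n r p G * Y G) / t := by
  classical
  have key := prob_le_of (n := n) (r := r) hp0 hp1 {G | ¬ (Y G ≤ t)}
    (fun G => Y G / t) (fun G => div_nonneg (hY G) ht.le)
    (fun G hG => by
      simp only [Set.mem_setOf_eq, not_le] at hG
      exact (one_le_div ht).2 hG.le)
  refine key.trans ?_
  have : ∀ G, pw n r p G * (Y G / t) = pw n r p G * Y G / t := fun G => by ring
  rw [Finset.sum_congr rfl fun G _ => this G, ← Finset.sum_div]


section Comb
variable {V W : Type*} [DecidableEq V] [DecidableEq W]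

lemma edge_subset_verts {F : Finset (Finset V)} {e : Finset V} (he : e ∈ F) :
    e ⊆ verts F := by
  intro x hx
  exact Finset.mem_sup.2 ⟨e, he, hx⟩

lemma IsCopyOf.card_eq {c : Finset (Finset W)} {F : Finset (Finset V)}
    (h : IsCopyOf c F) : c.card = F.card := by
  obtain ⟨f, hf, rfl⟩ := h
  apply Finset.card_image_of_injOn
  intro e1 he1 e2 he2 hee
  have he1' : e1 ∈ F := he1
  have he2' : e2 ∈ F := he2
  have hee' : Finset.image f e1 = Finset.image f e2 := hee
  have h1 : e1 ⊆ e2 := by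
    intro x hx
    have hm : f x ∈ Finset.image f e2 := by
      rw [← hee']; exact Finset.mem_image_of_mem _ hx
    obtain ⟨y, hy, hyx⟩ := Finset.mem_image.1 hm
    have := hf (edge_subset_verts he2' hy) (edge_subset_verts he1' hx) hyx
    rwa [← this]
  have h2 : e2 ⊆ e1 := by
    intro x hx
    have hm : f x ∈ Finset.image f e1 := by
      rw [hee']; exact Finset.mem_image_of_mem _ hx
    obtain ⟨y, hy, hyx⟩ := Finset.mem_image.1 hm
    have := hf (edge_subset_verts he1' hy) (edge_subset_verts he2' hx) hyx
    rwa [← this]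
  exact Finset.Subset.antisymm h1 h2

lemma IsCopyOf.nonempty {c : Finset (Finset W)} {F : Finset (Finset V)}
    (h : IsCopyOf c F) (hF : F.Nonempty) : c.Nonempty := by
  obtain ⟨f, hf, rfl⟩ := h
  exact hF.image _

lemma ContainsCopy.mono {G' : Finset (Finset W)} {F H : Finset (Finset V)}
    (hFH : F ⊆ H) (h : ContainsCopy G' H) : ContainsCopy G' F := by
  obtain ⟨c, hcG, f, hf, rfl⟩ := h
  refine ⟨F.image (fun e => e.image f), ?_, f, ?_, rfl⟩
  · exact (Finset.image_subset_image hFH).trans hcG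
  · exact hf.mono (Finset.coe_subset.2 (Finset.sup_mono hFH))

lemma exNum_le_card (G : Finset (Finset W)) (H : Finset (Finset V)) :
    exNum G H ≤ G.card := by
  classical
  apply Finset.sup_le
  intro c hc
  exact Finset.card_le_card (Finset.mem_powerset.1 (Finset.mem_filter.1 hc).1)

open Classical in
lemma le_exNum_add (G : Finset (Finset W)) (F H : Finset (Finset V))
    (hFH : F ⊆ H) (hF : F.Nonempty) :
    G.card ≤ exNum G H + (G.powerset.filter (fun c => IsCopyOf c F)).card := by
  set D := G.powerset.filter (fun c => IsCopyOf c F) with hD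
  set pick : Finset (Finset W) → Finset W :=
    fun c => if h : c.Nonempty then h.choose else ∅ with hpick
  set G' := G \ D.image pick with hG'
  have hsub : G' ⊆ G := Finset.sdiff_subset
  have hno : ¬ ContainsCopy G' H := by
    intro hcc
    obtain ⟨c', hc'G, hcopy⟩ := hcc.mono hFH
    have hc'D : c' ∈ D := by
      rw [hD, Finset.mem_filter, Finset.mem_powerset]
      exact ⟨hc'G.trans hsub, hcopy⟩
    have hne : c'.Nonempty := hcopy.nonempty hF
    have hpc : pick c' ∈ c' := by
      rw [hpick]; simp only [dif_pos hne]; exact hne.choose_spec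
    have h1 : pick c' ∈ G' := hc'G hpc
    have h2 : pick c' ∈ D.image pick := Finset.mem_image_of_mem pick hc'D
    rw [hG'] at h1
    exact (Finset.mem_sdiff.1 h1).2 h2
  have hmem : G' ∈ G.powerset.filter (fun x => ¬ ContainsCopy x H) :=
    Finset.mem_filter.2 ⟨Finset.mem_powerset.2 hsub, hno⟩
  have h1 : G'.card ≤ exNum G H := Finset.le_sup (f := Finset.card) hmem
  have h2 : G.card ≤ G'.card + (D.image pick).card := by
    calc G.card ≤ (G' ∪ D.image pick).card := by
          apply Finset.card_le_card
          intro x hx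
          by_cases h : x ∈ D.image pick
          · exact Finset.mem_union_right _ h
          · exact Finset.mem_union_left _ (Finset.mem_sdiff.2 ⟨hx, h⟩)
      _ ≤ G'.card + (D.image pick).card := Finset.card_union_le _ _
  have h3 : (D.image pick).card ≤ D.card := Finset.card_image_le
  omega

end Comb

open Classical in
lemma copies_card_le {V : Type*} [DecidableEq V] {n r : ℕ} (hn : 0 < n)
    (F : Finset (Finset V)) :
    ((allEdges n r).powerset.filter (fun c => IsCopyOf c F)).card
      ≤ n ^ (verts F).card := by
  classical
  set Cn := (allEdges n r).powerset.filter (fun c => IsCopyOf c F) with hCn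
  set φ : Finset (Finset (Fin n)) → ({y // y ∈ verts F} → Fin n) :=
    fun c => fun x => if h : IsCopyOf c F then h.choose x.1 else ⟨0, hn⟩ with hφ
  have hinj : Set.InjOn φ ↑Cn := by
    intro c hc c' hc' hcc
    have h : IsCopyOf c F := (Finset.mem_filter.1 hc).2
    have h' : IsCopyOf c' F := (Finset.mem_filter.1 hc').2
    obtain ⟨hfi, hceq⟩ := h.choose_spec
    obtain ⟨hfi', hceq'⟩ := h'.choose_spec
    rw [hceq, hceq']
    refine Finset.image_congr ?_
    intro e he
    refine Finset.image_congr ?_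
    intro a ha
    have hav : a ∈ verts F := edge_subset_verts he ha
    have := congrFun hcc ⟨a, hav⟩
    simpa [hφ, dif_pos h, dif_pos h'] using this
  calc Cn.card ≤ (Finset.univ : Finset ({y // y ∈ verts F} → Fin n)).card :=
        Finset.card_le_card_of_injOn φ (fun _ _ => Finset.mem_univ _) hinj
    _ = n ^ (verts F).card := by
        rw [Finset.card_univ, Fintype.card_fun]
        simp

lemma verts_card_lb {V : Type*} [DecidableEq V] {F : Finset (Finset V)} {r : ℕ}
    (hU : IsUniform F r) (h2 : 2 ≤ F.card) : r + 1 ≤ (verts F).card := by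
  obtain ⟨e1, he1, e2, he2, hne⟩ := Finset.one_lt_card.1 h2
  have hx : ∃ x ∈ e2, x ∉ e1 := by
    by_contra h
    push_neg at h
    have hsub : e2 ⊆ e1 := h
    have := Finset.eq_of_subset_of_card_le hsub (by rw [hU e1 he1, hU e2 he2])
    exact hne this.symm
  obtain ⟨x, hx2, hx1⟩ := hx
  have hins : insert x e1 ⊆ verts F := by
    rw [Finset.insert_subset_iff]
    exact ⟨edge_subset_verts he2 hx2, edge_subset_verts he1⟩
  calc r + 1 = (insert x e1).card := by
        rw [Finset.card_insert_of_notMem hx1, hU e1 he1]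
    _ ≤ (verts F).card := Finset.card_le_card hins

lemma mDensity_attained {V : Type*} [DecidableEq V] {r : ℕ} {H : Finset (Finset V)}
    (hH2 : 2 ≤ H.card) :
    ∃ F, F ⊆ H ∧ 2 ≤ F.card ∧
      mDensity r H = ((F.card : ℝ) - 1) / (((verts F).card : ℝ) - (r : ℝ)) := by
  classical
  set fn : Finset (Finset V) → ℝ :=
    fun G => ((G.card : ℝ) - 1) / (((verts G).card : ℝ) - (r : ℝ)) with hfn
  set T := H.powerset.filter (fun G => 2 ≤ G.card) with hT
  have hset : {x : ℝ | ∃ G : Finset (Finset V), G ⊆ H ∧ 2 ≤ G.card ∧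
      x = ((G.card : ℝ) - 1) / (((verts G).card : ℝ) - (r : ℝ))}
      = ↑(T.image fn) := by
    ext x
    simp only [Set.mem_setOf_eq, Finset.coe_image, Set.mem_image, Finset.mem_coe,
      hT, Finset.mem_filter, Finset.mem_powerset, hfn]
    constructor
    · rintro ⟨G, h1, h2, h3⟩; exact ⟨G, ⟨h1, h2⟩, h3.symm⟩
    · rintro ⟨G, ⟨h1, h2⟩, h3⟩; exact ⟨G, h1, h2, h3.symm⟩
  have hne : (T.image fn).Nonempty := by
    refine ⟨fn H, Finset.mem_image_of_mem fn ?_⟩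
    rw [hT, Finset.mem_filter, Finset.mem_powerset]
    exact ⟨Finset.Subset.refl H, hH2⟩
  have hmem : mDensity r H ∈ {x : ℝ | ∃ G : Finset (Finset V), G ⊆ H ∧ 2 ≤ G.card ∧
      x = ((G.card : ℝ) - 1) / (((verts G).card : ℝ) - (r : ℝ))} := by
    rw [hset, mDensity, hset]
    have := (Finset.coe_nonempty.2 hne).csSup_mem (T.image fn).finite_toSet
    exact_mod_cast this
  obtain ⟨F, h1, h2, h3⟩ := hmem
  exact ⟨F, h1, h2, h3⟩

lemma choose_lb {n r : ℕ} (hn : 2 * r ≤ n) :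
    (n : ℝ) ^ r ≤ (2 ^ r * r.factorial : ℝ) * (n.choose r : ℝ) := by
  have key : n ^ r ≤ 2 ^ r * r.factorial * n.choose r := by
    have h1 : (n - r) ^ r ≤ n.descFactorial r := by
      rw [Nat.descFactorial_eq_prod_range]
      calc (n - r) ^ r = ∏ _i ∈ Finset.range r, (n - r) := by
            rw [Finset.prod_const, Finset.card_range]
        _ ≤ ∏ i ∈ Finset.range r, (n - i) := by
            refine Finset.prod_le_prod' fun i hi => ?_
            have := Finset.mem_range.1 hi
            omega
    have h2 : n ^ r ≤ 2 ^ r * (n - r) ^ r := by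
      rw [← mul_pow]
      exact Nat.pow_le_pow_left (by omega) r
    calc n ^ r ≤ 2 ^ r * (n - r) ^ r := h2
      _ ≤ 2 ^ r * n.descFactorial r := Nat.mul_le_mul_left _ h1
      _ = 2 ^ r * (r.factorial * n.choose r) := by
          rw [Nat.descFactorial_eq_factorial_mul_choose]
      _ = 2 ^ r * r.factorial * n.choose r := by ring
  calc (n : ℝ) ^ r = ((n ^ r : ℕ) : ℝ) := by push_cast; ring
    _ ≤ ((2 ^ r * r.factorial * n.choose r : ℕ) : ℝ) := by exact_mod_cast key
    _ = (2 ^ r * r.factorial : ℝ) * (n.choose r : ℝ) := by push_cast; ring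

lemma allEdges_card (n r : ℕ) : (allEdges n r).card = n.choose r := by
  rw [allEdges, Finset.card_powersetCard, Finset.card_univ, Fintype.card_fin]

open Classical in
/-- the finset of copies of `F` inside the complete `r`-graph on `Fin n`. -/
noncomputable def copiesIn {V : Type*} [DecidableEq V] (F : Finset (Finset V)) (n r : ℕ) :
    Finset (Finset (Finset (Fin n))) :=
  (allEdges n r).powerset.filter (fun c => IsCopyOf c F)

open Classical in
lemma expect_copies {V : Type*} [DecidableEq V] {n r : ℕ} {p : ℝ} (F : Finset (Finset V)) :
    ∑ G ∈ (allEdges n r).powerset,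
        pw n r p G * (((copiesIn F n r).filter (· ⊆ G)).card : ℝ)
      = ((copiesIn F n r).card : ℝ) * p ^ F.card := by
  classical
  have hS : ∀ c ∈ copiesIn F n r, c ⊆ allEdges n r := by
    intro c hc
    rw [copiesIn, Finset.mem_filter, Finset.mem_powerset] at hc
    exact hc.1
  rw [expect_count (copiesIn F n r) hS]
  have hcc : ∀ c ∈ copiesIn F n r, p ^ c.card = p ^ F.card := by
    intro c hc
    rw [copiesIn, Finset.mem_filter] at hc
    rw [hc.2.card_eq]
  rw [Finset.sum_congr rfl hcc, Finset.sum_const, nsmul_eq_mul]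

lemma copiesIn_card_le {V : Type*} [DecidableEq V] {n r : ℕ} (hn : 0 < n)
    (F : Finset (Finset V)) : (copiesIn F n r).card ≤ n ^ (verts F).card :=
  copies_card_le hn F

theorem statement_9 {V : Type} [DecidableEq V] (r : ℕ) (H : Finset (Finset V))
    (hH : IsUniform H r) (hH2 : 2 ≤ H.card)
    (p : ℕ → ℝ) (hp : ∀ n, 0 < p n ∧ p n ≤ 1)
    (h1 : Tendsto (fun n : ℕ => p n * (n : ℝ) ^ r) atTop atTop)
    (h2 : Tendsto (fun n : ℕ => p n * (n : ℝ) ^ sDensity r H) atTop (nhds 0)) :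
    ∀ ε : ℝ, 0 < ε →
      Tendsto (fun n : ℕ => prob n r (p n)
        {G | |(exNum G H : ℝ) - p n * (n.choose r : ℝ)| ≤ ε * (p n * (n.choose r : ℝ))})
        atTop (nhds 1) := by
  classical
  intro ε hε
  obtain ⟨F, hFH, hF2, hmEq⟩ := mDensity_attained (r := r) hH2
  have hFU : IsUniform F r := fun e he => hH e (hFH he)
  have hFne : F.Nonempty := Finset.card_pos.1 (by omega)
  have hv : r + 1 ≤ (verts F).card := verts_card_lb hFU hF2
  have hvR : (r : ℝ) + 1 ≤ ((verts F).card : ℝ) := by exact_mod_cast hv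
  have he2R : (2 : ℝ) ≤ (F.card : ℝ) := by exact_mod_cast hF2
  have hden : (0 : ℝ) < ((verts F).card : ℝ) - r := by linarith
  have hnum : (0 : ℝ) < (F.card : ℝ) - 1 := by linarith
  have hs : sDensity r H = (((verts F).card : ℝ) - r) / ((F.card : ℝ) - 1) := by
    rw [sDensity, hmEq, one_div_div]
  have hkR : ((F.card - 1 : ℕ) : ℝ) = (F.card : ℝ) - 1 := by
    rw [Nat.cast_sub (by omega : 1 ≤ F.card)]; norm_num
  have hvrR : (((verts F).card - r : ℕ) : ℝ) = ((verts F).card : ℝ) - r :=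
    Nat.cast_sub (by omega)
  have hsk : sDensity r H * ((F.card - 1 : ℕ) : ℝ) = (((verts F).card - r : ℕ) : ℝ) := by
    rw [hs, hkR, hvrR, div_mul_cancel₀ _ (ne_of_gt hnum)]
  have hc0pos : (0 : ℝ) < 2 ^ r * r.factorial := by positivity
  -- lower bound via union bound
  have hlb : ∀ n : ℕ, 1 - prob n r (p n) {G : Finset (Finset (Fin n)) | ¬ (|(G.card : ℝ) - ((allEdges n r).card : ℝ) * p n| ≤ ε / 2 * (p n * (n.choose r : ℝ)))} - prob n r (p n) {G : Finset (Finset (Fin n)) | ¬ ((((copiesIn F n r).filter (· ⊆ G)).card : ℝ) ≤ ε / 2 * (p n * (n.choose r : ℝ)))}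
      ≤ prob n r (p n) {G | |(exNum G H : ℝ) - p n * (n.choose r : ℝ)| ≤ ε * (p n * (n.choose r : ℝ))} := by
    intro n
    refine prob_ge (hp n).1.le (hp n).2 _ _ _ ?_
    intro G hG hGB1 hGB2
    simp only [Set.mem_setOf_eq, not_not] at hGB1 hGB2
    have hGsub := Finset.mem_powerset.1 hG
    rw [allEdges_card] at hGB1
    have hub : exNum G H ≤ G.card := exNum_le_card G H
    have hDeq : G.powerset.filter (fun c => IsCopyOf c F)
        = (copiesIn F n r).filter (· ⊆ G) := by
      ext c
      simp only [copiesIn, Finset.mem_filter, Finset.mem_powerset]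
      constructor
      · rintro ⟨hcg, hic⟩; exact ⟨⟨hcg.trans hGsub, hic⟩, hcg⟩
      · rintro ⟨⟨_, hic⟩, h3⟩; exact ⟨h3, hic⟩
    have hlow := le_exNum_add G F H hFH hFne
    rw [hDeq] at hlow
    rw [Set.mem_setOf_eq]
    have hEX : (exNum G H : ℝ) ≤ (G.card : ℝ) := by exact_mod_cast hub
    have hXE : (G.card : ℝ) ≤ (exNum G H : ℝ)
        + (((copiesIn F n r).filter (· ⊆ G)).card : ℝ) := by exact_mod_cast hlow
    have habs := abs_le.1 hGB1
    have hNN : (0 : ℝ) ≤ p n * (n.choose r : ℝ) :=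
      mul_nonneg (hp n).1.le (Nat.cast_nonneg _)
    have hhalf : (0 : ℝ) ≤ ε / 2 * (p n * (n.choose r : ℝ)) := by positivity
    rw [abs_le]
    constructor <;> linarith [habs.1, habs.2, hGB2, hhalf, hXE, hEX]
  have hub1 : ∀ n : ℕ, prob n r (p n) {G | |(exNum G H : ℝ) - p n * (n.choose r : ℝ)| ≤ ε * (p n * (n.choose r : ℝ))} ≤ 1 :=
    fun n => prob_le_one (hp n).1.le (hp n).2 _
  -- p n * choose → ∞
  have hpN_top : Tendsto (fun n => p n * (n.choose r : ℝ)) atTop atTop := by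
    have hlow : ∀ᶠ n in atTop,
        p n * (n : ℝ) ^ r / (2 ^ r * r.factorial) ≤ p n * (n.choose r : ℝ) := by
      filter_upwards [eventually_ge_atTop (2 * r)] with n hn
      have hcb := choose_lb (n := n) (r := r) hn
      have hppos := (hp n).1
      rw [div_le_iff₀ hc0pos]
      calc p n * (n : ℝ) ^ r
          ≤ p n * ((2 ^ r * r.factorial : ℝ) * (n.choose r : ℝ)) :=
            mul_le_mul_of_nonneg_left hcb hppos.le
        _ = p n * (n.choose r : ℝ) * (2 ^ r * r.factorial) := by ring
    exact tendsto_atTop_mono' atTop hlow (h1.atTop_div_const hc0pos)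
  -- B1 probability → 0
  have hB1le : ∀ᶠ n in atTop, prob n r (p n) {G : Finset (Finset (Fin n)) | ¬ (|(G.card : ℝ) - ((allEdges n r).card : ℝ) * p n| ≤ ε / 2 * (p n * (n.choose r : ℝ)))}
      ≤ 4 / (ε ^ 2 * (p n * (n.choose r : ℝ))) := by
    filter_upwards [eventually_ge_atTop (r + 1)] with n hn
    have hNpos : (0 : ℝ) < (n.choose r : ℝ) := by
      exact_mod_cast Nat.choose_pos (show r ≤ n by omega)
    have hppos := (hp n).1
    have htpos : (0 : ℝ) < ε / 2 * (p n * (n.choose r : ℝ)) := by positivity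
    have hcheb := chebyshev (n := n) (r := r) (hp n).1.le (hp n).2 htpos
    refine hcheb.trans (le_of_eq ?_)
    rw [allEdges_card]
    rw [div_eq_div_iff (by positivity) (by positivity)]
    ring
  have hbound1 : Tendsto (fun n => 4 / (ε ^ 2 * (p n * (n.choose r : ℝ))))
      atTop (nhds 0) := by
    have hmul : Tendsto (fun n => ε ^ 2 * (p n * (n.choose r : ℝ))) atTop atTop :=
      hpN_top.const_mul_atTop (by positivity)
    have h4 := hmul.inv_tendsto_atTop.const_mul (4 : ℝ)
    simpa [div_eq_mul_inv] using h4
  have hB1tend : Tendsto (fun n : ℕ => prob n r (p n) {G : Finset (Finset (Fin n)) | ¬ (|(G.card : ℝ) - ((allEdges n r).card : ℝ) * p n| ≤ ε / 2 * (p n * (n.choose r : ℝ)))}) atTop (nhds 0) :=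
    tendsto_of_tendsto_of_tendsto_of_le_of_le' tendsto_const_nhds hbound1
      (Eventually.of_forall fun n => prob_nonneg (hp n).1.le (hp n).2 _) hB1le
  -- B2 probability → 0
  have hB2le : ∀ᶠ n in atTop, prob n r (p n) {G : Finset (Finset (Fin n)) | ¬ ((((copiesIn F n r).filter (· ⊆ G)).card : ℝ) ≤ ε / 2 * (p n * (n.choose r : ℝ)))}
      ≤ (2 * (2 ^ r * r.factorial) / ε)
          * (p n * (n : ℝ) ^ sDensity r H) ^ (F.card - 1) := by
    filter_upwards [eventually_ge_atTop (2 * r + 1)] with n hn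
    have hnpos : 0 < n := by omega
    have hn0 : (0 : ℝ) ≤ (n : ℝ) := Nat.cast_nonneg n
    have hNpos : (0 : ℝ) < (n.choose r : ℝ) := by
      exact_mod_cast Nat.choose_pos (show r ≤ n by omega)
    have hppos := (hp n).1
    have htpos : (0 : ℝ) < ε / 2 * (p n * (n.choose r : ℝ)) := by positivity
    have hmark := markov (n := n) (r := r) (hp n).1.le (hp n).2
      (fun G => (((copiesIn F n r).filter (· ⊆ G)).card : ℝ))
      (fun G => Nat.cast_nonneg _) htpos
    refine hmark.trans ?_
    rw [expect_copies F]
    have hCb : ((copiesIn F n r).card : ℝ) ≤ (n : ℝ) ^ (verts F).card := by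
      exact_mod_cast copiesIn_card_le hnpos F
    have hNlb : (n : ℝ) ^ r ≤ (2 ^ r * r.factorial : ℝ) * (n.choose r : ℝ) :=
      choose_lb (by omega)
    have hsplit : (n : ℝ) ^ (verts F).card
        = (n : ℝ) ^ ((verts F).card - r) * (n : ℝ) ^ r := by
      rw [← pow_add]; congr 1; omega
    have hrpow : (p n * (n : ℝ) ^ sDensity r H) ^ (F.card - 1)
        = (p n) ^ (F.card - 1) * (n : ℝ) ^ ((verts F).card - r) := by
      rw [mul_pow]
      congr 1
      rw [← Real.rpow_natCast ((n : ℝ) ^ sDensity r H) (F.card - 1),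
        ← Real.rpow_mul hn0, hsk, Real.rpow_natCast]
    have he0k : (p n) ^ F.card = (p n) ^ (F.card - 1) * p n := by
      rw [← pow_succ]; congr 1; omega
    rw [hrpow, div_le_iff₀ htpos]
    have key : ((copiesIn F n r).card : ℝ) * (p n) ^ F.card
        ≤ (2 ^ r * r.factorial : ℝ) * ((n : ℝ) ^ ((verts F).card - r)
            * ((p n) ^ (F.card - 1) * (p n * (n.choose r : ℝ)))) := by
      calc ((copiesIn F n r).card : ℝ) * (p n) ^ F.card
          ≤ (n : ℝ) ^ (verts F).card * (p n) ^ F.card :=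
            mul_le_mul_of_nonneg_right hCb (by positivity)
        _ = (n : ℝ) ^ ((verts F).card - r) * (n : ℝ) ^ r
              * ((p n) ^ (F.card - 1) * p n) := by rw [hsplit, he0k]; try ring
        _ ≤ (n : ℝ) ^ ((verts F).card - r)
              * ((2 ^ r * r.factorial : ℝ) * (n.choose r : ℝ))
              * ((p n) ^ (F.card - 1) * p n) := by
            refine mul_le_mul_of_nonneg_right ?_ (by positivity)
            exact mul_le_mul_of_nonneg_left hNlb (by positivity)
        _ = (2 ^ r * r.factorial : ℝ) * ((n : ℝ) ^ ((verts F).card - r)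
              * ((p n) ^ (F.card - 1) * (p n * (n.choose r : ℝ)))) := by ring
    refine key.trans (le_of_eq ?_)
    have hεne : ε ≠ 0 := ne_of_gt hε
    field_simp
  have hbound2 : Tendsto (fun n => (2 * (2 ^ r * r.factorial) / ε)
      * (p n * (n : ℝ) ^ sDensity r H) ^ (F.card - 1)) atTop (nhds 0) := by
    have hpow := h2.pow (F.card - 1)
    have hcm := hpow.const_mul (2 * (2 ^ r * r.factorial : ℝ) / ε)
    simpa [zero_pow (show F.card - 1 ≠ 0 by omega)] using hcm
  have hB2tend : Tendsto (fun n : ℕ => prob n r (p n) {G : Finset (Finset (Fin n)) | ¬ ((((copiesIn F n r).filter (· ⊆ G)).card : ℝ) ≤ ε / 2 * (p n * (n.choose r : ℝ)))}) atTop (nhds 0) :=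
    tendsto_of_tendsto_of_tendsto_of_le_of_le' tendsto_const_nhds hbound2
      (Eventually.of_forall fun n => prob_nonneg (hp n).1.le (hp n).2 _) hB2le
  have hLtend : Tendsto (fun n : ℕ => 1 - prob n r (p n) {G : Finset (Finset (Fin n)) | ¬ (|(G.card : ℝ) - ((allEdges n r).card : ℝ) * p n| ≤ ε / 2 * (p n * (n.choose r : ℝ)))}
      - prob n r (p n) {G : Finset (Finset (Fin n)) | ¬ ((((copiesIn F n r).filter (· ⊆ G)).card : ℝ) ≤ ε / 2 * (p n * (n.choose r : ℝ)))}) atTop (nhds 1) := by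
    have hc := ((tendsto_const_nhds (x := (1 : ℝ)) (f := atTop)).sub hB1tend).sub hB2tend
    simpa using hc
  exact tendsto_of_tendsto_of_tendsto_of_le_of_le' hLtend tendsto_const_nhds
    (Eventually.of_forall hlb) (Eventually.of_forall hub1)


end Paper
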